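/- Suppose U ⊆ V ⊆ ℕ. With γ = 17/16, μ_U, μ_V, σ_U, σ_V as before, define μ(0) = 1 and μ^α(n+1) = (1+σ_V(n+1))/(1+σ_U(n+1)) − (1+σ_V(n))/(1+σ_U(n)). Assume 0 ∈ V \ U. Then for all n ≥ 1: (γ−1)/(n+2)³ ≤ μ^α(n) ≤ 1. -/

import Mathlib

open Set

noncomputable def muA (U : Set ℕ) (n : ℕ) : ℝ :=
  if n = 0 then 1 else (17 / 16 : ℝ) ^ (U ∩ Set.Iio ⌊1 + Real.log n⌋₊).ncard

noncomputable def sigmaA (U : Set ℕ) (n : ℕ) : ℝ := ∑ i ∈ Finset.Icc 1 n, muA U i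

lemma muA_eq (U : Set ℕ) (n : ℕ) (hn : 1 ≤ n) :
    muA U n = (17 / 16 : ℝ) ^ (U ∩ Set.Iio ⌊1 + Real.log n⌋₊).ncard := by
  simp [muA, Nat.one_le_iff_ne_zero.mp hn]

lemma one_le_muA (U : Set ℕ) (n : ℕ) : 1 ≤ muA U n := by
  unfold muA; split
  · exact le_refl _
  · exact one_le_pow₀ (by norm_num)

lemma pow_floor_le (n : ℕ) (hn : 1 ≤ n) :
    (17 / 16 : ℝ) ^ ⌊1 + Real.log n⌋₊ ≤ Real.sqrt (n + 2) := by
  have hn1 : (1 : ℝ) ≤ n := by exact_mod_cast hn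
  have hL : (0 : ℝ) ≤ Real.log n := Real.log_nonneg hn1
  have hγ : (1 : ℝ) ≤ 17 / 16 := by norm_num
  have hγ0 : (0 : ℝ) < 17 / 16 := by norm_num
  have h1 : ((⌊1 + Real.log n⌋₊ : ℕ) : ℝ) ≤ 1 + Real.log n := Nat.floor_le (by linarith)
  have step1 : (17 / 16 : ℝ) ^ ⌊1 + Real.log n⌋₊ ≤ (17 / 16 : ℝ) ^ ((1 : ℝ) + Real.log n) := by
    rw [← Real.rpow_natCast]
    exact Real.rpow_le_rpow_of_exponent_le hγ h1
  have step2 : (17 / 16 : ℝ) ^ ((1 : ℝ) + Real.log n) ≤ (17 / 16) * (n : ℝ) ^ ((1 : ℝ) / 16) := by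
    rw [Real.rpow_add hγ0, Real.rpow_one]
    gcongr
    rw [Real.rpow_def_of_pos hγ0, Real.rpow_def_of_pos (by linarith : (0:ℝ) < n)]
    apply Real.exp_le_exp.mpr
    have hlog : Real.log (17 / 16) ≤ 1 / 16 := by
      have := Real.log_le_sub_one_of_pos hγ0
      linarith
    have hlog2 : Real.log ((n : ℝ)) * (1/16) = 1/16 * Real.log n := by ring
    calc Real.log (17/16) * Real.log n ≤ (1/16) * Real.log n := by
          exact mul_le_mul_of_nonneg_right hlog hL
      _ = Real.log n * (1/16) := by ring
  have step3 : (17 / 16 : ℝ) * (n : ℝ) ^ ((1 : ℝ) / 16) ≤ Real.sqrt (n + 2) := by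
    have hx0 : (0:ℝ) ≤ (n : ℝ) ^ ((1 : ℝ) / 16) := Real.rpow_nonneg (by linarith) _
    have hs0 : (0:ℝ) ≤ Real.sqrt (n + 2) := Real.sqrt_nonneg _
    apply le_of_pow_le_pow_left₀ (n := 16) (by norm_num) hs0
    have e1 : ((n : ℝ) ^ ((1 : ℝ) / 16)) ^ (16 : ℕ) = (n : ℝ) := by
      rw [← Real.rpow_natCast ((n : ℝ) ^ ((1 : ℝ) / 16)), ← Real.rpow_mul (by linarith)]
      norm_num
    have e2 : (Real.sqrt (n + 2)) ^ (16 : ℕ) = ((n : ℝ) + 2) ^ (8 : ℕ) := by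
      rw [show (16 : ℕ) = 2 * 8 by norm_num, pow_mul, Real.sq_sqrt (by linarith)]
    rw [mul_pow, e1, e2]
    have h3 : (3 : ℝ) ≤ (n : ℝ) + 2 := by linarith
    have h7 : (3 : ℝ) ^ (7:ℕ) ≤ ((n:ℝ) + 2) ^ (7:ℕ) := pow_le_pow_left₀ (by norm_num) h3 7
    have : ((n:ℝ)+2)^(8:ℕ) = ((n:ℝ)+2)^(7:ℕ) * ((n:ℝ)+2) := by ring
    rw [this]
    have hc : ((17:ℝ)/16)^(16:ℕ) ≤ 3 := by norm_num
    nlinarith [h7, h3, hn1]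
  linarith


lemma muA_le (U : Set ℕ) (n : ℕ) (hn : 1 ≤ n) : muA U n ≤ Real.sqrt (n + 2) := by
  rw [muA_eq U n hn]
  refine le_trans ?_ (pow_floor_le n hn)
  apply pow_le_pow_right₀ (by norm_num)
  calc (U ∩ Set.Iio ⌊1 + Real.log n⌋₊).ncard
      ≤ (Set.Iio ⌊1 + Real.log n⌋₊).ncard :=
        Set.ncard_le_ncard inter_subset_right (Set.finite_Iio _)
    _ = ⌊1 + Real.log n⌋₊ := by
        have : (Set.Iio ⌊1 + Real.log (n:ℝ)⌋₊) = ↑(Finset.Iio ⌊1 + Real.log (n:ℝ)⌋₊) := by simp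
        rw [this, Set.ncard_coe_finset, Nat.card_Iio]

lemma sigma_lb (U : Set ℕ) (n : ℕ) : (n : ℝ) ≤ sigmaA U n := by
  calc (n : ℝ) = ∑ _i ∈ Finset.Icc 1 n, (1:ℝ) := by simp
    _ ≤ sigmaA U n := Finset.sum_le_sum fun i _ => one_le_muA U i

lemma sigma_ub (U : Set ℕ) (n : ℕ) :
    1 + sigmaA U n ≤ ((n : ℝ) + 1) * Real.sqrt (n + 2) := by
  have h1 : (1:ℝ) ≤ Real.sqrt (n + 2) := by
    rw [show (1:ℝ) = Real.sqrt 1 by simp]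
    exact Real.sqrt_le_sqrt (by linarith [Nat.cast_nonneg (α := ℝ) n])
  have h2 : sigmaA U n ≤ (n : ℝ) * Real.sqrt (n + 2) := by
    calc sigmaA U n ≤ ∑ _i ∈ Finset.Icc 1 n, Real.sqrt (n + 2) := by
          apply Finset.sum_le_sum
          intro i hi
          simp only [Finset.mem_Icc] at hi
          refine (muA_le U i hi.1).trans (Real.sqrt_le_sqrt ?_)
          have : (i:ℝ) ≤ n := by exact_mod_cast hi.2
          linarith
      _ = (n : ℝ) * Real.sqrt (n + 2) := by simp [Nat.card_Icc, mul_comm]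
  nlinarith

lemma ncard_split (U V : Set ℕ) (hUV : U ⊆ V) (m : ℕ) :
    (V ∩ Set.Iio m).ncard = (U ∩ Set.Iio m).ncard + ((V \ U) ∩ Set.Iio m).ncard := by
  rw [← Set.ncard_union_eq]
  · congr 1
    ext x
    constructor
    · rintro ⟨hV, hI⟩
      by_cases hU : x ∈ U
      · exact Or.inl ⟨hU, hI⟩
      · exact Or.inr ⟨⟨hV, hU⟩, hI⟩
    · rintro (⟨hU, hI⟩ | ⟨⟨hV, _⟩, hI⟩)
      exacts [⟨hUV hU, hI⟩, ⟨hV, hI⟩]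
  · rw [Set.disjoint_left]
    rintro x ⟨hU, _⟩ h2
    exact h2.1.2 hU

set_option maxHeartbeats 1000000 in
/-- The increments `μ^α(n)` of `(1+σ_V)/(1+σ_U)` satisfy `(γ−1)/(n+2)³ ≤ μ^α(n) ≤ 1`. -/
theorem stmt19 (U V : Set ℕ) (hUV : U ⊆ V) (h0V : 0 ∈ V) (h0U : 0 ∉ U) :
    let μα : ℕ → ℝ := fun n =>
      (1 + sigmaA V n) / (1 + sigmaA U n) - (1 + sigmaA V (n - 1)) / (1 + sigmaA U (n - 1))
    ∀ n : ℕ, 1 ≤ n →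
      ((17 / 16 : ℝ) - 1) / ((n : ℝ) + 2) ^ 3 ≤ μα n ∧ μα n ≤ 1 := by
  intro μα n hn
  obtain ⟨k, rfl⟩ : ∃ k, n = k + 1 := ⟨n - 1, (Nat.succ_pred_eq_of_pos hn).symm⟩
  have hsub : k + 1 - 1 = k := rfl
  set m : ℕ := ⌊1 + Real.log ((k+1 : ℕ) : ℝ)⌋₊ with hm
  set A : ℝ := 1 + sigmaA V k with hA
  set B : ℝ := 1 + sigmaA U k with hB
  set v : ℝ := muA V (k+1) with hv
  set u : ℝ := muA U (k+1) with hu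
  set e : ℕ := ((V \ U) ∩ Set.Iio m).ncard with he
  -- basic positivity / size facts
  have hkB : (k : ℝ) + 1 ≤ B := by
    have := sigma_lb U k; rw [hB]; linarith
  have hB0 : (0:ℝ) < B := by linarith [Nat.cast_nonneg (α := ℝ) k]
  have hu1 : 1 ≤ u := one_le_muA U (k+1)
  have hv1 : 1 ≤ v := one_le_muA V (k+1)
  have hBu0 : (0:ℝ) < B + u := by linarith
  -- sum recursion
  have hrecU : sigmaA U (k+1) = sigmaA U k + muA U (k+1) :=
    Finset.sum_Icc_succ_top (by omega) _
  have hrecV : sigmaA V (k+1) = sigmaA V k + muA V (k+1) :=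
    Finset.sum_Icc_succ_top (by omega) _
  -- the increment as a single fraction
  have hμ : μα (k+1) = (v * B - u * A) / (B * (B + u)) := by
    show (1 + sigmaA V (k+1)) / (1 + sigmaA U (k+1)) - A / B = _
    rw [hrecV, hrecU]
    have : 1 + (sigmaA V k + muA V (k+1)) = A + v := by rw [hA, hv]; ring
    rw [this]
    have : 1 + (sigmaA U k + muA U (k+1)) = B + u := by rw [hB, hu]; ring
    rw [this]
    field_simp
    ring
  -- e ≥ 1
  have hm1 : 1 ≤ m := by
    apply Nat.le_floor
    have h : (0:ℝ) ≤ Real.log ((k+1:ℕ) : ℝ) := Real.log_nonneg (by exact_mod_cast Nat.one_le_iff_ne_zero.mpr (by omega))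
    push_cast at h ⊢
    linarith
  have he1 : 1 ≤ e := by
    rw [he]
    have h0mem : 0 ∈ (V \ U) ∩ Set.Iio m := ⟨⟨h0V, h0U⟩, Set.mem_Iio.mpr hm1⟩
    have hfin : ((V \ U) ∩ Set.Iio m).Finite := (Set.finite_Iio m).subset inter_subset_right
    exact (Set.ncard_pos hfin).mpr ⟨0, h0mem⟩
  -- v = u * γ^e
  have hvu : v = u * (17/16:ℝ) ^ e := by
    rw [hv, hu, muA_eq V _ (by omega), muA_eq U _ (by omega),
      ncard_split U V hUV, pow_add]
  -- per-term ratio bound for i ≤ k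
  have hratio : ∀ i ∈ Finset.Icc 1 k, muA V i ≤ (17/16:ℝ) ^ e * muA U i := by
    intro i hi
    simp only [Finset.mem_Icc] at hi
    have hi1 : 1 ≤ i := hi.1
    set mi : ℕ := ⌊1 + Real.log ((i : ℕ) : ℝ)⌋₊ with hmi
    have hmile : mi ≤ m := by
      apply Nat.floor_le_floor
      have : Real.log ((i:ℕ):ℝ) ≤ Real.log ((k+1:ℕ):ℝ) := by
        apply Real.log_le_log (by exact_mod_cast hi1)
        exact_mod_cast Nat.le_succ_of_le hi.2
      linarith
    have hei : ((V \ U) ∩ Set.Iio mi).ncard ≤ e := by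
      rw [he]
      exact Set.ncard_le_ncard (inter_subset_inter_right _ (Set.Iio_subset_Iio (by exact_mod_cast hmile))) ((Set.finite_Iio m).subset inter_subset_right)
    calc muA V i = (17/16:ℝ)^((U ∩ Set.Iio mi).ncard) * (17/16:ℝ)^(((V\U) ∩ Set.Iio mi).ncard) := by
          rw [muA_eq V i hi1, ncard_split U V hUV, pow_add]
      _ ≤ (17/16:ℝ)^((U ∩ Set.Iio mi).ncard) * (17/16:ℝ)^e :=
          mul_le_mul_of_nonneg_left (pow_le_pow_right₀ (by norm_num) hei) (by positivity)
      _ = (17/16:ℝ)^e * muA U i := by rw [muA_eq U i hi1]; ring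
  -- A ≤ 1 + γ^e * (B - 1)
  have hAle : A ≤ 1 + (17/16:ℝ) ^ e * (B - 1) := by
    rw [hA, hB]
    have : sigmaA V k ≤ (17/16:ℝ) ^ e * sigmaA U k := by
      rw [sigmaA, sigmaA, Finset.mul_sum]
      exact Finset.sum_le_sum hratio
    linarith
  have hγe : (17/16:ℝ) ≤ (17/16:ℝ) ^ e := by
    calc (17/16:ℝ) = (17/16:ℝ)^(1:ℕ) := (pow_one _).symm
      _ ≤ _ := pow_le_pow_right₀ (by norm_num) he1
  -- numerator lower bound
  have hnum : 1/16 ≤ v * B - u * A := by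
    have h1 : u * A ≤ u * (1 + (17/16:ℝ)^e * (B-1)) :=
      mul_le_mul_of_nonneg_left hAle (by linarith)
    have h2 : v * B = u * (17/16:ℝ)^e * B := by rw [hvu]
    nlinarith [hγe, hu1, hB0]
  -- denominator bounds
  have hub1 : B ≤ ((k:ℝ) + 1) * Real.sqrt (k + 2) := by
    rw [hB]; exact sigma_ub U k
  have hub2 : B + u ≤ ((k:ℝ) + 2) * Real.sqrt (k + 3) := by
    have := sigma_ub U (k+1)
    rw [hrecU] at this
    rw [hB, hu]
    push_cast at this ⊢
    rw [show ((k:ℝ)+1+2) = (k:ℝ)+3 from by ring, show ((k:ℝ)+1+1) = (k:ℝ)+2 from by ring] at this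
    linarith
  have hsqrt : Real.sqrt ((k:ℝ) + 2) * Real.sqrt ((k:ℝ) + 3) ≤ (k:ℝ) + 3 := by
    have h1 : Real.sqrt ((k:ℝ)+2) ≤ Real.sqrt ((k:ℝ)+3) := Real.sqrt_le_sqrt (by linarith)
    have h2 : Real.sqrt ((k:ℝ)+3) * Real.sqrt ((k:ℝ)+3) = (k:ℝ)+3 :=
      Real.mul_self_sqrt (by positivity)
    nlinarith [Real.sqrt_nonneg ((k:ℝ)+2), Real.sqrt_nonneg ((k:ℝ)+3)]
  have hden : B * (B + u) ≤ ((k:ℝ) + 3) ^ 3 := by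
    have h1 : B * (B+u) ≤ (((k:ℝ)+1) * Real.sqrt (k+2)) * (((k:ℝ)+2) * Real.sqrt (k+3)) := by
      apply mul_le_mul hub1 hub2 (by linarith) (by positivity)
    have h2 : (((k:ℝ)+1) * Real.sqrt (k+2)) * (((k:ℝ)+2) * Real.sqrt (k+3))
        = ((k:ℝ)+1)*((k:ℝ)+2) * (Real.sqrt ((k:ℝ)+2) * Real.sqrt ((k:ℝ)+3)) := by ring
    have h3 : ((k:ℝ)+1)*((k:ℝ)+2) * (Real.sqrt ((k:ℝ)+2) * Real.sqrt ((k:ℝ)+3)) ≤ ((k:ℝ)+1)*((k:ℝ)+2)*((k:ℝ)+3) := by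
      apply mul_le_mul_of_nonneg_left hsqrt (by positivity)
    have h4 : ((k:ℝ)+1)*((k:ℝ)+2)*((k:ℝ)+3) ≤ ((k:ℝ)+3)^3 := by
      nlinarith [Nat.cast_nonneg (α := ℝ) k]
    rw [h2] at h1
    exact le_trans (le_trans h1 h3) h4
  have hden0 : (0:ℝ) < B * (B + u) := by positivity
  constructor
  · -- lower bound
    rw [hμ]
    have hcast : ((k+1:ℕ):ℝ) + 2 = (k:ℝ) + 3 := by push_cast; ring
    rw [hcast]
    calc ((17:ℝ)/16 - 1) / ((k:ℝ)+3)^3 = (1/16) / ((k:ℝ)+3)^3 := by norm_num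
      _ ≤ (1/16) / (B * (B+u)) := by
          apply div_le_div_of_nonneg_left (by norm_num) hden0 hden
      _ ≤ (v * B - u * A) / (B * (B+u)) := by
          exact div_le_div_of_nonneg_right hnum hden0.le
  · -- upper bound
    rw [hμ, div_le_one hden0]
    have hvle : v ≤ B + u := by
      have h1 : v ≤ Real.sqrt ((k+1:ℕ) + 2) := muA_le V (k+1) (by omega)
      have h2 : Real.sqrt ((k+1:ℕ) + 2) ≤ (k:ℝ) + 2 := by
        rw [show ((k+1:ℕ):ℝ) + 2 = (k:ℝ)+3 by push_cast; ring]
        rw [show (k:ℝ)+2 = Real.sqrt (((k:ℝ)+2)^2) from (Real.sqrt_sq (by positivity)).symm]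
        apply Real.sqrt_le_sqrt
        nlinarith [Nat.cast_nonneg (α := ℝ) k]
      linarith
    have hA0 : (0:ℝ) < A := by
      have := sigma_lb V k
      rw [hA]; linarith [Nat.cast_nonneg (α := ℝ) k]
    nlinarith [mul_le_mul_of_nonneg_right hvle hB0.le, mul_pos (lt_of_lt_of_le zero_lt_one hu1) hA0]
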